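/- Let n be a natural number and let t, τ : Fin n → ℝ be nondecreasing functions. Then for every permutation π of Fin n, ∑_{i} |τ(i) − t(i)| ≤ ∑_{i} |τ(π(i)) − t(i)|. In other words, among all bijective matchings between the sorted arrival times t and the sorted matching-point times τ, the order-preserving (identity) matching minimizes the total absolute deviation. -/

import Mathlib

/-- Exchange lemma: crossing assignments cost at least as much. -/
lemma exchange_abs {a b c d : ℝ} (hab : a ≤ b) (hcd : c ≤ d) :
    |c - a| + |d - b| ≤ |d - a| + |c - b| := by
  rcases abs_cases (c - a) with ⟨h1, _⟩ | ⟨h1, _⟩ <;>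
  rcases abs_cases (d - b) with ⟨h2, _⟩ | ⟨h2, _⟩ <;>
  rcases abs_cases (d - a) with ⟨h3, _⟩ | ⟨h3, _⟩ <;>
  rcases abs_cases (c - b) with ⟨h4, _⟩ | ⟨h4, _⟩ <;>
  linarith

/-- For nondecreasing `t, τ : Fin n → ℝ`, the identity
(order-preserving) matching minimizes the total absolute deviation among all
bijective matchings given by permutations `π` of `Fin n`. -/
theorem orderPreserving_matching_optimal (n : ℕ) (t τ : Fin n → ℝ)
    (ht : Monotone t) (hτ : Monotone τ) (π : Equiv.Perm (Fin n)) :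
    ∑ i : Fin n, |τ i - t i| ≤ ∑ i : Fin n, |τ (π i) - t i| := by
  induction n with
  | zero => simp
  | succ n ih =>
    set i0 : Fin (n + 1) := π⁻¹ 0 with hi0
    have hπi0 : π i0 = 0 := Equiv.apply_symm_apply π 0
    set π' : Equiv.Perm (Fin (n + 1)) := π * Equiv.swap 0 i0 with hπ'
    have hπ'0 : π' 0 = 0 := by
      simp [hπ', Equiv.Perm.mul_apply, Equiv.swap_apply_left, hπi0]
    -- Step 1: cost of π' ≤ cost of π (exchange argument)
    have step1 : ∑ i : Fin (n + 1), |τ (π' i) - t i| ≤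
        ∑ i : Fin (n + 1), |τ (π i) - t i| := by
      rcases eq_or_ne i0 0 with h0 | h0
      · have : π' = π := by
          rw [hπ', h0, Equiv.swap_self]
          rfl
        rw [this]
      · have hsub : ({0, i0} : Finset (Fin (n + 1))) ⊆ Finset.univ := by
          simp
        rw [← Finset.sum_sdiff hsub, ← Finset.sum_sdiff hsub]
        have hco : ∀ i ∈ Finset.univ \ ({0, i0} : Finset (Fin (n + 1))),
            |τ (π' i) - t i| = |τ (π i) - t i| := by
          intro i hi
          simp only [Finset.mem_sdiff, Finset.mem_insert, Finset.mem_singleton] at hi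
          push_neg at hi
          rw [hπ']
          simp [Equiv.Perm.mul_apply, Equiv.swap_apply_of_ne_of_ne hi.2.1 hi.2.2]
        rw [Finset.sum_congr rfl hco]
        refine (add_le_add_iff_left _).mpr ?_
        rw [Finset.sum_pair (Ne.symm h0), Finset.sum_pair (Ne.symm h0)]
        have e1 : π' 0 = 0 := hπ'0
        have e2 : π' i0 = π 0 := by
          simp [hπ', Equiv.Perm.mul_apply, Equiv.swap_apply_right]
        rw [e1, e2, hπi0]
        exact exchange_abs (ht (Fin.zero_le i0)) (hτ (Fin.zero_le (π 0)))
    refine le_trans ?_ step1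
    -- Step 2: π' fixes 0; decompose and use induction hypothesis
    set σ : Equiv.Perm (Fin n) := (Equiv.Perm.decomposeFin π').2 with hσ
    have hdec : π' = Equiv.Perm.decomposeFin.symm (0, σ) := by
      have h1 : (Equiv.Perm.decomposeFin π').1 = 0 := by
        have := Equiv.Perm.decomposeFin_symm_apply_zero
          (Equiv.Perm.decomposeFin π').1 (Equiv.Perm.decomposeFin π').2
        rw [Prod.mk.eta, Equiv.symm_apply_apply] at this
        rw [← this, hπ'0]
      rw [← h1, hσ, Prod.mk.eta, Equiv.symm_apply_apply]
    have hsucc : ∀ x : Fin n, π' x.succ = (σ x).succ := by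
      intro x
      rw [hdec, Equiv.Perm.decomposeFin_symm_apply_succ, Equiv.swap_self]
      rfl
    rw [Fin.sum_univ_succ, Fin.sum_univ_succ]
    have hrw : ∀ x : Fin n, |τ (π' x.succ) - t x.succ| = |τ ((σ x).succ) - t x.succ| := by
      intro x; rw [hsucc]
    rw [Finset.sum_congr rfl (fun x _ => hrw x), hπ'0]
    refine (add_le_add_iff_left _).mpr ?_
    exact ih (fun x => t x.succ) (fun x => τ x.succ)
      (ht.comp (Fin.strictMono_succ.monotone)) (hτ.comp (Fin.strictMono_succ.monotone)) σ
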